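/- (Second version of Peano's Theorem: least and greatest solutions in dimension one.) Let t0, y0 ∈ ℝ and a, b, L > 0, and suppose f : [t0, t0+a] × [y0−b, y0+b] → ℝ is continuous with |f(t,y)| ≤ L for all (t,y) in its domain. Set c = min{a, b/L} and I = [t0, t0+c]. Then there exist differentiable functions φ_*, φ^* : I → ℝ, each with value y0 at t0, each with values in [y0−b, y0+b], and each satisfying y' = f(t,y) on I, such that every differentiable φ : I → ℝ with φ(t0) = y0, values in [y0−b, y0+b], and φ'(t) = f(t, φ(t)) on I satisfies φ_*(t) ≤ φ(t) ≤ φ^*(t) for all t ∈ I. -/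

import Mathlib

open Set Filter MeasureTheory intervalIntegral Topology

set_option maxHeartbeats 1000000

namespace PeanoAux


/-- FTC: derivative form to integral form. -/
lemma deriv_to_integral (t0 c : ℝ) (g w : ℝ → ℝ)
    (hw : ContinuousOn w (Icc t0 (t0 + c)))
    (hg : ∀ t ∈ Icc t0 (t0 + c), HasDerivWithinAt g (w t) (Icc t0 (t0 + c)) t) :
    ∀ t ∈ Icc t0 (t0 + c), g t = g t0 + ∫ s in t0..t, w s := by
  intro t ht
  have hsub : Icc t0 t ⊆ Icc t0 (t0 + c) := Icc_subset_Icc le_rfl ht.2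
  have h1 : ∫ s in t0..t, w s = g t - g t0 := by
    apply intervalIntegral.integral_eq_sub_of_hasDeriv_right_of_le ht.1
    · exact fun s hs => ((hg s (hsub hs)).continuousWithinAt).mono hsub
    · intro x hx
      have hx' : x ∈ Icc t0 (t0 + c) := hsub (Ioo_subset_Icc_self hx)
      refine (hg x hx').mono_of_mem_nhdsWithin ?_
      refine mem_nhdsWithin.mpr ⟨Iio (t0 + c), isOpen_Iio, lt_of_lt_of_le hx.2 ht.2, ?_⟩
      rintro u ⟨hu1, hu2⟩
      exact ⟨le_trans hx'.1 (le_of_lt hu2), le_of_lt hu1⟩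
    · exact ContinuousOn.intervalIntegrable (by rw [uIcc_of_le ht.1]; exact hw.mono hsub)
  rw [h1]; ring

/-- FTC: integral form to derivative form (needs globally continuous field). -/
lemma integral_to_deriv (t0 y0 c : ℝ) (hc : 0 ≤ c) (G : ℝ → ℝ → ℝ)
    (hG : Continuous fun p : ℝ × ℝ => G p.1 p.2)
    (g : ℝ → ℝ) (hgc : ContinuousOn g (Icc t0 (t0 + c)))
    (hg : ∀ t ∈ Icc t0 (t0 + c), g t = y0 + ∫ s in t0..t, G s (g s)) :
    ∀ t ∈ Icc t0 (t0 + c), HasDerivWithinAt g (G t (g t)) (Icc t0 (t0 + c)) t := by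
  have hle : t0 ≤ t0 + c := by linarith
  set p : ℝ → ℝ := fun s => (projIcc t0 (t0 + c) hle s : ℝ) with hp
  have hpc : Continuous p := continuous_subtype_val.comp continuous_projIcc
  have hpmem : ∀ s, p s ∈ Icc t0 (t0 + c) := fun s => (projIcc t0 (t0 + c) hle s).2
  set W : ℝ → ℝ := fun s => G (p s) (g (p s)) with hW
  have hWc : Continuous W := by
    have h1 : Continuous fun s => g (p s) := hgc.comp_continuous hpc hpmem
    exact hG.comp (hpc.prodMk h1)
  intro t ht
  have key : ∀ u ∈ Icc t0 (t0 + c), g u = y0 + ∫ s in t0..u, W s := by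
    intro u hu
    rw [hg u hu]
    congr 1
    apply intervalIntegral.integral_congr
    intro s hs
    rw [uIcc_of_le hu.1] at hs
    have hs' : s ∈ Icc t0 (t0 + c) := ⟨hs.1, hs.2.trans hu.2⟩
    simp only [hW, hp, projIcc_of_mem hle hs']
  have hH : HasDerivAt (fun u => y0 + ∫ s in t0..u, W s) (W t) t := by
    have := intervalIntegral.integral_hasDerivAt_right (hWc.intervalIntegrable t0 t)
      (hWc.stronglyMeasurable.stronglyMeasurableAtFilter) hWc.continuousAt
    exact this.const_add y0
  have h2 : HasDerivWithinAt (fun u => y0 + ∫ s in t0..u, W s) (W t) (Icc t0 (t0 + c)) t :=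
    hH.hasDerivWithinAt
  have h3 := h2.congr (fun u hu => key u hu) (key t ht)
  have hWt : W t = G t (g t) := by simp only [hW, hp, projIcc_of_mem hle ht]
  rwa [hWt] at h3

/-- Lipschitz estimate from the integral form. -/
lemma lip_of_integral (t0 y0 c M' : ℝ) (g w : ℝ → ℝ)
    (hw : ∀ s ∈ Icc t0 (t0 + c), |w s| ≤ M')
    (hwc : ContinuousOn w (Icc t0 (t0 + c)))
    (hint : ∀ t ∈ Icc t0 (t0 + c), g t = y0 + ∫ s in t0..t, w s) :
    ∀ t ∈ Icc t0 (t0 + c), ∀ t' ∈ Icc t0 (t0 + c), |g t - g t'| ≤ M' * |t - t'| := by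
  intro t ht t' ht'
  have hi : ∀ u, u ∈ Icc t0 (t0 + c) → IntervalIntegrable w volume t0 u := by
    intro u hu
    exact ContinuousOn.intervalIntegrable (by rw [uIcc_of_le hu.1]; exact hwc.mono (Icc_subset_Icc le_rfl hu.2))
  have h1 : g t - g t' = ∫ s in t'..t, w s := by
    rw [hint t ht, hint t' ht']
    have := intervalIntegral.integral_interval_sub_left (hi t ht) (hi t' ht')
    rw [← this]; ring
  rw [h1]
  have : ∀ s ∈ uIoc t' t, ‖w s‖ ≤ M' := by
    intro s hs
    rw [Set.mem_uIoc] at hs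
    have hs' : s ∈ Icc t0 (t0 + c) := by
      rcases hs with h | h
      · exact ⟨ht'.1.trans h.1.le, h.2.trans ht.2⟩
      · exact ⟨ht.1.trans h.1.le, h.2.trans ht'.2⟩
    simpa [Real.norm_eq_abs] using hw s hs'
  calc |∫ s in t'..t, w s| ≤ M' * |t - t'| :=
    intervalIntegral.norm_integral_le_of_norm_le_const this



/-- Strict differential inequality comparison: a solution lies below a strict supersolution. -/
lemma comparison (t0 c : ℝ) (G : ℝ → ℝ → ℝ) {ε : ℝ} (hε : 0 < ε) (φ ψ : ℝ → ℝ)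
    (h0 : φ t0 = ψ t0)
    (hφ : ∀ t ∈ Icc t0 (t0 + c), HasDerivWithinAt φ (G t (φ t)) (Icc t0 (t0 + c)) t)
    (hψ : ∀ t ∈ Icc t0 (t0 + c), HasDerivWithinAt ψ (G t (ψ t) + ε) (Icc t0 (t0 + c)) t) :
    ∀ t ∈ Icc t0 (t0 + c), φ t ≤ ψ t := by
  by_contra hcon
  push_neg at hcon
  obtain ⟨t1, ht1, hlt⟩ := hcon
  set u : ℝ → ℝ := fun t => φ t - ψ t with hu
  have huc : ContinuousOn u (Icc t0 (t0 + c)) := fun t ht =>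
    ((hφ t ht).continuousWithinAt.sub (hψ t ht).continuousWithinAt)
  have ht01 : t0 ≤ t1 := ht1.1
  have hsub1 : Icc t0 t1 ⊆ Icc t0 (t0 + c) := Icc_subset_Icc le_rfl ht1.2
  set S := Icc t0 t1 ∩ u ⁻¹' Iic 0 with hS
  have hSne : S.Nonempty := ⟨t0, left_mem_Icc.2 ht01, by simp [hu, h0]⟩
  have hSclosed : IsClosed S :=
    (huc.mono hsub1).preimage_isClosed_of_isClosed isClosed_Icc isClosed_Iic
  have hScomp : IsCompact S := isCompact_Icc.of_isClosed_subset hSclosed inter_subset_left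
  set s := sSup S with hs
  have hsS : s ∈ S := hScomp.sSup_mem hSne
  have hsI1 : s ∈ Icc t0 t1 := hsS.1
  have hsI : s ∈ Icc t0 (t0 + c) := hsub1 hsI1
  have hut1 : 0 < u t1 := by simp only [hu]; linarith
  have hst1 : s < t1 := by
    rcases lt_or_eq_of_le hsI1.2 with h | h
    · exact h
    · exfalso; have := hsS.2; rw [h] at this; simp only [mem_preimage, mem_Iic] at this; linarith
  have hpos : ∀ t ∈ Ioc s t1, 0 < u t := by
    intro t ht
    by_contra hle
    push_neg at hle
    have htS : t ∈ S := ⟨⟨hsI1.1.trans ht.1.le, ht.2⟩, by simpa using hle⟩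
    have : t ≤ s := le_csSup hScomp.bddAbove htS
    exact absurd ht.1 (not_lt.2 this)
  have hIocsub : Ioc s t1 ⊆ Icc t0 (t0 + c) := fun t ht =>
    ⟨hsI1.1.trans ht.1.le, ht.2.trans ht1.2⟩
  have hus0 : u s = 0 := by
    have hle : u s ≤ 0 := by simpa using hsS.2
    have hge : 0 ≤ u s := by
      have htend : Tendsto u (𝓝[Ioc s t1] s) (𝓝 (u s)) :=
        ((huc s hsI).mono hIocsub).tendsto
      have hne : (𝓝[Ioc s t1] s).NeBot := by
        rw [nhdsWithin_Ioc_eq_nhdsGT hst1]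
        infer_instance
      exact ge_of_tendsto htend (eventually_mem_nhdsWithin.mono fun t ht => (hpos t ht).le)
    linarith
  have hφψs : φ s = ψ s := by have := hus0; simp only [hu] at this; linarith
  have hder : HasDerivWithinAt u (-ε) (Icc t0 (t0 + c)) s := by
    have h1 := (hφ s hsI).sub (hψ s hsI)
    have : G s (φ s) - (G s (ψ s) + ε) = -ε := by rw [hφψs]; ring
    rwa [this] at h1
  have hder2 : HasDerivWithinAt u (-ε) (Ioc s t1) s := hder.mono hIocsub
  rw [hasDerivWithinAt_iff_tendsto_slope] at hder2
  have hdiff : Ioc s t1 \ {s} = Ioc s t1 := by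
    apply diff_singleton_eq_self; simp
  rw [hdiff] at hder2
  have hev : ∀ᶠ t in 𝓝[Ioc s t1] s, slope u s t < 0 :=
    hder2.eventually_lt_const (by linarith)
  have hne : (𝓝[Ioc s t1] s).NeBot := by
    rw [nhdsWithin_Ioc_eq_nhdsGT hst1]; infer_instance
  obtain ⟨t, hts, htm⟩ := (hev.and eventually_mem_nhdsWithin).exists
  have hts' : (u t - u s) / (t - s) < 0 := by
    rw [slope_def_field] at hts
    simpa [div_eq_inv_mul] using hts
  have htpos : 0 < t - s := by have := htm.1; linarith
  have : u t - u s < 0 := by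
    by_contra hge
    push_neg at hge
    exact absurd hts' (not_lt.2 (div_nonneg hge htpos.le))
  rw [hus0] at this
  exact absurd (hpos t htm) (by linarith)



/-- Arzelà–Ascoli extraction for a uniformly Lipschitz, pointwise-anchored family. -/
lemma aa_extract (t0 y0 c : ℝ) (hc : 0 ≤ c) {M : ℝ} (hM : 0 ≤ M) (g : ℕ → ℝ → ℝ)
    (hval : ∀ k, g k t0 = y0)
    (hlip : ∀ k, ∀ t ∈ Icc t0 (t0 + c), ∀ t' ∈ Icc t0 (t0 + c),
      |g k t - g k t'| ≤ M * |t - t'|) :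
    ∃ ψ : ℝ → ℝ, ContinuousOn ψ (Icc t0 (t0 + c)) ∧ ∃ σ : ℕ → ℕ, StrictMono σ ∧
      ∀ t ∈ Icc t0 (t0 + c), Tendsto (fun j => g (σ j) t) atTop (𝓝 (ψ t)) := by
  have hle : t0 ≤ t0 + c := by linarith
  have ht0I : t0 ∈ Icc t0 (t0 + c) := ⟨le_rfl, hle⟩
  set α := ↥(Icc t0 (t0 + c)) with hα
  have hcont : ∀ k, Continuous fun x : α => g k x := by
    intro k
    apply LipschitzWith.continuous (K := ⟨M, hM⟩)
    apply LipschitzWith.of_dist_le_mul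
    intro x y
    rw [Subtype.dist_eq, Real.dist_eq, Real.dist_eq]
    exact hlip k x x.2 y y.2
  set F : ℕ → BoundedContinuousFunction α ℝ :=
    fun k => BoundedContinuousFunction.mkOfCompact ⟨fun x => g k x, hcont k⟩ with hF
  set s : Set ℝ := Icc (y0 - M * c) (y0 + M * c) with hs
  have hins : ∀ k (x : α), g k x ∈ s := by
    intro k x
    have h1 : |g k x - g k t0| ≤ M * |(x : ℝ) - t0| := hlip k x x.2 t0 ht0I
    have h2 : |(x : ℝ) - t0| ≤ c := by
      rw [abs_le]; constructor <;> [linarith [x.2.1]; linarith [x.2.2]]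
    have h3 : |g k x - y0| ≤ M * c := by
      rw [hval] at h1
      exact h1.trans (mul_le_mul_of_nonneg_left h2 hM)
    rw [abs_le] at h3
    exact ⟨by linarith [h3.1], by linarith [h3.2]⟩
  set A : Set (BoundedContinuousFunction α ℝ) :=
    {h | (∀ x, h x ∈ s) ∧ ∀ x y : α, dist (h x) (h y) ≤ M * dist x y} with hA
  have hequi : Equicontinuous fun x : A => (x : α → ℝ) := by
    apply Metric.equicontinuous_of_continuity_modulus (fun d => M * d)
    · have : Tendsto (fun d : ℝ => M * d) (𝓝 0) (𝓝 (M * 0)) :=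
        (continuous_const.mul continuous_id).tendsto 0
      simpa using this
    · intro x y i
      exact i.2.2 x y
  have hAcomp : IsCompact (closure A) :=
    BoundedContinuousFunction.arzela_ascoli s isCompact_Icc A (fun h x hh => hh.1 x) hequi
  have hFA : ∀ k, F k ∈ closure A := by
    intro k
    apply subset_closure
    refine ⟨fun x => hins k x, fun x y => ?_⟩
    simp only [hF, BoundedContinuousFunction.mkOfCompact]
    rw [Real.dist_eq, Subtype.dist_eq, Real.dist_eq]
    exact hlip k x x.2 y y.2
  obtain ⟨ψB, _, σ, hσ, hconv⟩ := hAcomp.tendsto_subseq hFA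
  refine ⟨fun t => ψB (projIcc t0 (t0 + c) hle t), ?_, σ, hσ, ?_⟩
  · exact (ψB.continuous.comp continuous_projIcc).continuousOn
  · intro t ht
    have hdist : Tendsto (fun j => dist (F (σ j)) ψB) atTop (𝓝 0) :=
      tendsto_iff_dist_tendsto_zero.mp hconv
    have hbd : ∀ j, dist (g (σ j) t) (ψB (projIcc t0 (t0 + c) hle t)) ≤ dist (F (σ j)) ψB := by
      intro j
      have := BoundedContinuousFunction.dist_coe_le_dist (f := F (σ j)) (g := ψB)
        (⟨t, ht⟩ : α)
      rw [projIcc_of_mem hle ht]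
      exact this
    apply tendsto_iff_dist_tendsto_zero.mpr
    exact squeeze_zero (fun j => dist_nonneg) hbd hdist



/-- Mollification of `G` in the space variable, written as a difference of primitives. -/
noncomputable def moll (G : ℝ → ℝ → ℝ) (δ : ℝ) (t y : ℝ) : ℝ :=
  (1 / δ) * ((∫ u in (0:ℝ)..(y + δ), G t u) - ∫ u in (0:ℝ)..y, G t u)

variable {G : ℝ → ℝ → ℝ} {M δ : ℝ}

lemma moll_eq (hG : Continuous fun p : ℝ × ℝ => G p.1 p.2) (t y : ℝ) :
    moll G δ t y = (1 / δ) * ∫ u in y..(y + δ), G t u := by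
  have hc : Continuous fun u => G t u := hG.comp (continuous_const.prodMk continuous_id)
  rw [moll, intervalIntegral.integral_interval_sub_left (hc.intervalIntegrable _ _)
    (hc.intervalIntegrable _ _)]

lemma moll_cont (hG : Continuous fun p : ℝ × ℝ => G p.1 p.2) :
    Continuous fun p : ℝ × ℝ => moll G δ p.1 p.2 := by
  have hA : Continuous fun p : ℝ × ℝ => ∫ u in (0:ℝ)..p.2, G p.1 u :=
    continuous_parametric_primitive_of_continuous (f := G) (μ := volume) (a₀ := 0) hG
  have h1 : Continuous fun p : ℝ × ℝ => ∫ u in (0:ℝ)..(p.2 + δ), G p.1 u := by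
    have h2 : Continuous fun p : ℝ × ℝ => ((p.1, p.2 + δ) : ℝ × ℝ) :=
      continuous_fst.prodMk (continuous_snd.add continuous_const)
    simpa [Function.comp_def] using hA.comp h2
  simp only [moll]
  exact continuous_const.mul (h1.sub hA)

lemma moll_bound (hG : Continuous fun p : ℝ × ℝ => G p.1 p.2)
    (hGM : ∀ t y, |G t y| ≤ M) (hδ : 0 < δ) (t y : ℝ) : |moll G δ t y| ≤ M := by
  have hM : 0 ≤ M := (abs_nonneg _).trans (hGM 0 0)
  rw [moll_eq hG, abs_mul]
  have h1 : |∫ u in y..(y + δ), G t u| ≤ M * |y + δ - y| := by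
    rw [← Real.norm_eq_abs]
    exact intervalIntegral.norm_integral_le_of_norm_le_const fun u _ => by
      rw [Real.norm_eq_abs]; exact hGM t u
  have h2 : |y + δ - y| = δ := by rw [add_sub_cancel_left, abs_of_pos hδ]
  rw [h2] at h1
  calc |1 / δ| * |∫ u in y..(y + δ), G t u| ≤ |1 / δ| * (M * δ) := by
        apply mul_le_mul_of_nonneg_left h1 (abs_nonneg _)
    _ = M := by rw [abs_of_pos (by positivity : (0:ℝ) < 1/δ)]; field_simp
 
lemma moll_lip (hG : Continuous fun p : ℝ × ℝ => G p.1 p.2)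
    (hGM : ∀ t y, |G t y| ≤ M) (hδ : 0 < δ) (t y y' : ℝ) :
    |moll G δ t y - moll G δ t y'| ≤ (2 * M / δ) * |y - y'| := by
  have hM : 0 ≤ M := (abs_nonneg _).trans (hGM 0 0)
  have hc : Continuous fun u => G t u := hG.comp (continuous_const.prodMk continuous_id)
  have key : ∀ z z' : ℝ, |(∫ u in (0:ℝ)..z, G t u) - ∫ u in (0:ℝ)..z', G t u| ≤ M * |z - z'| := by
    intro z z'
    rw [intervalIntegral.integral_interval_sub_left (hc.intervalIntegrable _ _)
      (hc.intervalIntegrable _ _)]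
    rw [← Real.norm_eq_abs]
    exact intervalIntegral.norm_integral_le_of_norm_le_const fun u _ => by
      rw [Real.norm_eq_abs]; exact hGM t u
  have e : moll G δ t y - moll G δ t y' = (1 / δ) *
      (((∫ u in (0:ℝ)..(y + δ), G t u) - ∫ u in (0:ℝ)..(y' + δ), G t u)
        - ((∫ u in (0:ℝ)..y, G t u) - ∫ u in (0:ℝ)..y', G t u)) := by
    rw [moll, moll]; ring
  rw [e, abs_mul, abs_of_pos (by positivity : (0:ℝ) < 1/δ)]
  have h1 := key (y + δ) (y' + δ)
  have h2 := key y y'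
  have h3 : |y + δ - (y' + δ)| = |y - y'| := by ring_nf
  rw [h3] at h1
  calc (1/δ) * |((∫ u in (0:ℝ)..(y + δ), G t u) - ∫ u in (0:ℝ)..(y' + δ), G t u)
        - ((∫ u in (0:ℝ)..y, G t u) - ∫ u in (0:ℝ)..y', G t u)|
      ≤ (1/δ) * (M * |y - y'| + M * |y - y'|) := by
        apply mul_le_mul_of_nonneg_left _ (by positivity)
        exact (abs_sub _ _).trans (add_le_add h1 h2)
    _ = (2 * M / δ) * |y - y'| := by field_simp; ring

lemma moll_tendsto (hG : Continuous fun p : ℝ × ℝ => G p.1 p.2)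
    {δs : ℕ → ℝ} (hδ : ∀ j, 0 < δs j) (hδ0 : Tendsto δs atTop (𝓝 0))
    {x : ℕ → ℝ} {s xl : ℝ} (hx : Tendsto x atTop (𝓝 xl)) :
    Tendsto (fun j => moll G (δs j) s (x j)) atTop (𝓝 (G s xl)) := by
  rw [Metric.tendsto_atTop]
  intro ε hε
  obtain ⟨r, hr, hball⟩ := Metric.continuousAt_iff.mp (hG.continuousAt (x := (s, xl)))
    (ε / 2) (by linarith)
  have h1 : ∀ᶠ j in atTop, |x j - xl| < r / 2 := by
    have := Metric.tendsto_atTop.mp hx (r / 2) (by linarith)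
    obtain ⟨N, hN⟩ := this
    exact eventually_atTop.mpr ⟨N, fun j hj => by simpa [Real.dist_eq] using hN j hj⟩
  have h2 : ∀ᶠ j in atTop, δs j < r / 2 := by
    have := Metric.tendsto_atTop.mp hδ0 (r / 2) (by linarith)
    obtain ⟨N, hN⟩ := this
    exact eventually_atTop.mpr ⟨N, fun j hj => by
      have := hN j hj; rw [Real.dist_eq, sub_zero, abs_of_pos (hδ j)] at this; exact this⟩
  obtain ⟨N, hN⟩ := eventually_atTop.mp (h1.and h2)
  refine ⟨N, fun j hj => ?_⟩
  obtain ⟨hj1, hj2⟩ := hN j hj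
  have hcu : Continuous fun u => G s u := hG.comp (continuous_const.prodMk continuous_id)
  have e1 : moll G (δs j) s (x j) - G s xl
      = (1 / δs j) * ∫ u in (x j)..(x j + δs j), (G s u - G s xl) := by
    rw [moll_eq hG, intervalIntegral.integral_sub (hcu.intervalIntegrable _ _)
      (intervalIntegrable_const), intervalIntegral.integral_const]
    have hne : δs j ≠ 0 := (hδ j).ne'
    field_simp
    rw [add_sub_cancel_left, smul_eq_mul]
  have hptbd : ∀ u ∈ uIoc (x j) (x j + δs j), ‖G s u - G s xl‖ ≤ ε / 2 := by
    intro u hu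
    have hu' : |u - x j| ≤ δs j := by
      rw [Set.mem_uIoc] at hu
      rcases hu with h | h
      · rw [abs_of_pos (by linarith [h.1])]; linarith [h.2]
      · exfalso; linarith [h.1, h.2, hδ j]
    have hdist : dist ((s, u) : ℝ × ℝ) (s, xl) < r := by
      rw [Prod.dist_eq]
      apply max_lt (by simpa using hr)
      rw [Real.dist_eq]
      calc |u - xl| ≤ |u - x j| + |x j - xl| := abs_sub_le _ _ _
        _ < δs j + r / 2 := by apply add_lt_add_of_le_of_lt hu' hj1
        _ < r := by linarith
    have := hball hdist
    rw [Real.dist_eq] at this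
    simpa [Real.norm_eq_abs] using this.le
  have hbd : |moll G (δs j) s (x j) - G s xl| ≤ ε / 2 := by
    rw [e1, abs_mul, abs_of_pos (one_div_pos.mpr (hδ j))]
    have h3 : |∫ u in (x j)..(x j + δs j), (G s u - G s xl)| ≤ ε / 2 * |x j + δs j - x j| := by
      rw [← Real.norm_eq_abs]
      exact intervalIntegral.norm_integral_le_of_norm_le_const hptbd
    have h4 : |x j + δs j - x j| = δs j := by
      rw [add_sub_cancel_left, abs_of_pos (hδ j)]
    rw [h4] at h3
    calc (1 / δs j) * |∫ u in (x j)..(x j + δs j), (G s u - G s xl)|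
        ≤ (1 / δs j) * (ε / 2 * δs j) := mul_le_mul_of_nonneg_left h3 (one_div_pos.mpr (hδ j)).le
      _ = ε / 2 := by
          rw [one_div, mul_comm (ε/2) (δs j), ← mul_assoc, inv_mul_cancel₀ (hδ j).ne', one_mul]
  rw [Real.dist_eq]
  linarith


attribute [irreducible] moll

/-- Peano existence theorem (integral form). -/
lemma peano (t0 y0 c : ℝ) (hc : 0 ≤ c) {M : ℝ} (hM : 0 ≤ M) (G : ℝ → ℝ → ℝ)
    (hG : Continuous fun p : ℝ × ℝ => G p.1 p.2) (hGM : ∀ t y, |G t y| ≤ M) :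
    ∃ g : ℝ → ℝ, ContinuousOn g (Icc t0 (t0 + c)) ∧ g t0 = y0 ∧
      (∀ t ∈ Icc t0 (t0 + c), |g t - y0| ≤ M * (t - t0)) ∧
      ∀ t ∈ Icc t0 (t0 + c), g t = y0 + ∫ s in t0..t, G s (g s) := by
  have hle : t0 ≤ t0 + c := by linarith
  have ht0I : t0 ∈ Icc t0 (t0 + c) := ⟨le_rfl, hle⟩
  set δs : ℕ → ℝ := fun k => 1 / ((k : ℝ) + 1) with hδs
  have hδpos : ∀ k, 0 < δs k := fun k => by positivity
  have hex : ∀ k : ℕ, ∃ g : ℝ → ℝ, g t0 = y0 ∧ ∀ t ∈ Icc t0 (t0 + c),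
      HasDerivWithinAt g (moll G (δs k) t (g t)) (Icc t0 (t0 + c)) t := by
    intro k
    have hpl : IsPicardLindelof (fun t y => moll G (δs k) t y) (tmin := t0) (tmax := t0 + c)
        ⟨t0, ⟨le_rfl, hle⟩⟩ y0 (Real.toNNReal (M * c + 1)) 0 (Real.toNNReal M)
        (Real.toNNReal (2 * M / δs k)) := by
      refine ⟨?_, ?_, ?_, ?_⟩
      · intro t _
        apply LipschitzOnWith.of_dist_le_mul
        intro x _ y _
        rw [Real.dist_eq, Real.dist_eq,
          Real.coe_toNNReal _ (by positivity : (0:ℝ) ≤ 2 * M / δs k)]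
        exact moll_lip hG hGM (hδpos k) t x y
      · exact fun y _ =>
          ((moll_cont hG).comp (continuous_id.prodMk continuous_const)).continuousOn
      · intro t _ y _
        rw [Real.norm_eq_abs, Real.coe_toNNReal _ hM]
        exact moll_bound hG hGM (hδpos k) t y
      · have h1 : t0 + c - t0 = c := by ring
        have h2 : t0 - t0 = 0 := by ring
        simp only [Real.coe_toNNReal _ hM, Real.coe_toNNReal _ (by positivity : (0:ℝ) ≤ M * c + 1),
          NNReal.coe_zero, sub_zero]
        rw [h1, h2, max_eq_left hc]
        linarith
    exact hpl.exists_eq_forall_mem_Icc_hasDerivWithinAt₀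
  choose g hg0 hgd using hex
  set w : ℕ → ℝ → ℝ := fun k s => moll G (δs k) s (g k s) with hw
  have hgc : ∀ k, ContinuousOn (g k) (Icc t0 (t0 + c)) :=
    fun k t ht => (hgd k t ht).continuousWithinAt
  have hwc : ∀ k, ContinuousOn (w k) (Icc t0 (t0 + c)) := by
    intro k
    exact (moll_cont hG).comp_continuousOn (continuousOn_id.prodMk (hgc k))
  have hwb : ∀ k, ∀ s, |w k s| ≤ M := fun k s => moll_bound hG hGM (hδpos k) s (g k s)
  have hint : ∀ k, ∀ t ∈ Icc t0 (t0 + c), g k t = y0 + ∫ s in t0..t, w k s := by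
    intro k t ht
    have := deriv_to_integral t0 c (g k) (w k) (hwc k) (hgd k) t ht
    rwa [hg0 k] at this
  have hlip : ∀ k, ∀ t ∈ Icc t0 (t0 + c), ∀ t' ∈ Icc t0 (t0 + c),
      |g k t - g k t'| ≤ M * |t - t'| :=
    fun k => lip_of_integral t0 y0 c M (g k) (w k) (fun s _ => hwb k s) (hwc k) (hint k)
  obtain ⟨ψ, hψc, σ, hσ, hconv⟩ := aa_extract t0 y0 c hc hM g hg0 hlip
  have hψ0 : ψ t0 = y0 := by
    refine tendsto_nhds_unique (hconv t0 ht0I) ?_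
    simp only [hg0]
    exact tendsto_const_nhds
  refine ⟨ψ, hψc, hψ0, ?_, ?_⟩
  · intro t ht
    have hbk : ∀ j, |g (σ j) t - y0| ≤ M * (t - t0) := by
      intro j
      have h1 : g (σ j) t - y0 = ∫ s in t0..t, w (σ j) s := by
        rw [hint (σ j) t ht]; ring
      rw [h1, ← Real.norm_eq_abs]
      have h2 := intervalIntegral.norm_integral_le_of_norm_le_const
        (f := w (σ j)) (C := M) (a := t0) (b := t)
        (fun s _ => by rw [Real.norm_eq_abs]; exact hwb (σ j) s)
      rwa [abs_of_nonneg (by linarith [ht.1] : (0:ℝ) ≤ t - t0)] at h2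
    have htend : Tendsto (fun j => |g (σ j) t - y0|) atTop (𝓝 (|ψ t - y0|)) :=
      ((hconv t ht).sub_const y0).abs
    exact le_of_tendsto htend (Eventually.of_forall hbk)
  · intro t ht
    have hsub : uIoc t0 t ⊆ Icc t0 (t0 + c) := by
      rw [uIoc_of_le ht.1]
      exact fun s hs => ⟨hs.1.le, hs.2.trans ht.2⟩
    have hlim : Tendsto (fun j => ∫ s in t0..t, w (σ j) s) atTop
        (𝓝 (∫ s in t0..t, G s (ψ s))) := by
      apply intervalIntegral.tendsto_integral_filter_of_dominated_convergence (fun _ => M)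
      · refine Eventually.of_forall fun j => ?_
        have := ((hwc (σ j)).mono hsub)
        rw [uIoc_of_le ht.1] at this ⊢
        exact this.aestronglyMeasurable measurableSet_Ioc
      · exact Eventually.of_forall fun j => ae_of_all _ fun s _ => by
          rw [Real.norm_eq_abs]; exact hwb (σ j) s
      · exact intervalIntegrable_const
      · refine ae_of_all _ fun s hs => ?_
        have hδ'pos : ∀ j, 0 < δs (σ j) := fun j => hδpos (σ j)
        have hδ'0 : Tendsto (fun j => δs (σ j)) atTop (𝓝 0) := by
          have hb : ∀ j : ℕ, δs (σ j) ≤ 1 / ((j : ℝ) + 1) := by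
            intro j
            apply one_div_le_one_div_of_le (by positivity)
            have h1 : (j : ℝ) ≤ (σ j : ℝ) := Nat.cast_le.mpr hσ.le_apply
            linarith
          exact squeeze_zero (fun j => (hδ'pos j).le) hb
            tendsto_one_div_add_atTop_nhds_zero_nat
        exact moll_tendsto hG hδ'pos hδ'0 (hconv s (hsub hs))
    have he : (fun j => g (σ j) t) = fun j => y0 + ∫ s in t0..t, w (σ j) s :=
      funext fun j => hint (σ j) t ht
    refine tendsto_nhds_unique (he ▸ hconv t ht) (hlim.const_add y0)

/-- Existence of a greatest solution. -/
lemma greatest (t0 y0 c : ℝ) (hc : 0 ≤ c) {M : ℝ} (hM : 0 ≤ M) (G : ℝ → ℝ → ℝ)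
    (hG : Continuous fun p : ℝ × ℝ => G p.1 p.2) (hGM : ∀ t y, |G t y| ≤ M) :
    ∃ g : ℝ → ℝ, ContinuousOn g (Icc t0 (t0 + c)) ∧ g t0 = y0 ∧
      (∀ t ∈ Icc t0 (t0 + c), |g t - y0| ≤ M * (t - t0)) ∧
      (∀ t ∈ Icc t0 (t0 + c), HasDerivWithinAt g (G t (g t)) (Icc t0 (t0 + c)) t) ∧
      ∀ φ : ℝ → ℝ, φ t0 = y0 →
        (∀ t ∈ Icc t0 (t0 + c), HasDerivWithinAt φ (G t (φ t)) (Icc t0 (t0 + c)) t) →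
        ∀ t ∈ Icc t0 (t0 + c), φ t ≤ g t := by
  have hle : t0 ≤ t0 + c := by linarith
  have ht0I : t0 ∈ Icc t0 (t0 + c) := ⟨le_rfl, hle⟩
  set εs : ℕ → ℝ := fun n => 1 / ((n : ℝ) + 1) with hεs
  have hεpos : ∀ n, 0 < εs n := fun n => by positivity
  have hεle : ∀ n, εs n ≤ 1 := by
    intro n
    rw [hεs]
    rw [div_le_one (by positivity)]
    simp
  set Gn : ℕ → ℝ → ℝ → ℝ := fun n t y => G t y + εs n with hGn
  have hGnc : ∀ n, Continuous fun p : ℝ × ℝ => Gn n p.1 p.2 :=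
    fun n => hG.add continuous_const
  have hGnM : ∀ n, ∀ t y, |Gn n t y| ≤ M + εs n := by
    intro n t y
    calc |G t y + εs n| ≤ |G t y| + |εs n| := abs_add_le _ _
      _ ≤ M + εs n := add_le_add (hGM t y) (le_of_eq (abs_of_pos (hεpos n)))
  have hex : ∀ n : ℕ, ∃ g : ℝ → ℝ, ContinuousOn g (Icc t0 (t0 + c)) ∧ g t0 = y0 ∧
      (∀ t ∈ Icc t0 (t0 + c), |g t - y0| ≤ (M + εs n) * (t - t0)) ∧
      ∀ t ∈ Icc t0 (t0 + c), g t = y0 + ∫ s in t0..t, Gn n s (g s) :=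
    fun n => peano t0 y0 c hc (by linarith [hεpos n]) (Gn n) (hGnc n) (hGnM n)
  choose g hgc hg0 hgb hgint using hex
  -- uniform Lipschitz bound
  have hwc : ∀ n, ContinuousOn (fun s => Gn n s (g n s)) (Icc t0 (t0 + c)) :=
    fun n => (hGnc n).comp_continuousOn (continuousOn_id.prodMk (hgc n))
  have hlip : ∀ n, ∀ t ∈ Icc t0 (t0 + c), ∀ t' ∈ Icc t0 (t0 + c),
      |g n t - g n t'| ≤ (M + 1) * |t - t'| := by
    intro n
    apply lip_of_integral t0 y0 c (M + 1) (g n) _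
      (fun s _ => (hGnM n s (g n s)).trans (by linarith [hεle n])) (hwc n) (hgint n)
  obtain ⟨ψ, hψc, σ, hσ, hconv⟩ := aa_extract t0 y0 c hc (by linarith) g hg0 hlip
  have hψ0 : ψ t0 = y0 := by
    refine tendsto_nhds_unique (hconv t0 ht0I) ?_
    simp only [hg0]
    exact tendsto_const_nhds
  have hεσ0 : Tendsto (fun j => εs (σ j)) atTop (𝓝 0) := by
    have hb : ∀ j : ℕ, εs (σ j) ≤ 1 / ((j : ℝ) + 1) := by
      intro j
      apply one_div_le_one_div_of_le (by positivity)
      have h1 : (j : ℝ) ≤ (σ j : ℝ) := Nat.cast_le.mpr hσ.le_apply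
      linarith
    exact squeeze_zero (fun j => (hεpos (σ j)).le) hb tendsto_one_div_add_atTop_nhds_zero_nat
  -- the limit solves the integral equation
  have hψint : ∀ t ∈ Icc t0 (t0 + c), ψ t = y0 + ∫ s in t0..t, G s (ψ s) := by
    intro t ht
    have hsub : uIoc t0 t ⊆ Icc t0 (t0 + c) := by
      rw [uIoc_of_le ht.1]
      exact fun s hs => ⟨hs.1.le, hs.2.trans ht.2⟩
    have hlim : Tendsto (fun j => ∫ s in t0..t, Gn (σ j) s (g (σ j) s)) atTop
        (𝓝 (∫ s in t0..t, G s (ψ s))) := by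
      apply intervalIntegral.tendsto_integral_filter_of_dominated_convergence (fun _ => M + 1)
      · refine Eventually.of_forall fun j => ?_
        have := (hwc (σ j)).mono hsub
        rw [uIoc_of_le ht.1] at this ⊢
        exact this.aestronglyMeasurable measurableSet_Ioc
      · exact Eventually.of_forall fun j => ae_of_all _ fun s _ => by
          rw [Real.norm_eq_abs]
          exact (hGnM (σ j) s (g (σ j) s)).trans (by linarith [hεle (σ j)])
      · exact intervalIntegrable_const
      · refine ae_of_all _ fun s hs => ?_
        have h1 : Tendsto (fun j => G s (g (σ j) s)) atTop (𝓝 (G s (ψ s))) := by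
          have h2 : Tendsto (fun j => ((s, g (σ j) s) : ℝ × ℝ)) atTop (𝓝 (s, ψ s)) :=
            tendsto_const_nhds.prodMk_nhds (hconv s (hsub hs))
          exact (hG.tendsto (s, ψ s)).comp h2
        have h3 := h1.add hεσ0
        simpa using h3
    have he : (fun j => g (σ j) t) = fun j => y0 + ∫ s in t0..t, Gn (σ j) s (g (σ j) s) :=
      funext fun j => hgint (σ j) t ht
    exact tendsto_nhds_unique (he ▸ hconv t ht) (hlim.const_add y0)
  have hψb : ∀ t ∈ Icc t0 (t0 + c), |ψ t - y0| ≤ M * (t - t0) := by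
    intro t ht
    have h1 : Tendsto (fun j => |g (σ j) t - y0|) atTop (𝓝 (|ψ t - y0|)) :=
      ((hconv t ht).sub_const y0).abs
    have h2 : Tendsto (fun j => (M + εs (σ j)) * (t - t0)) atTop (𝓝 (M * (t - t0))) := by
      have := (hεσ0.const_add M).mul_const (t - t0)
      simpa using this
    exact le_of_tendsto_of_tendsto' h1 h2 fun j => hgb (σ j) t ht
  refine ⟨ψ, hψc, hψ0, hψb, integral_to_deriv t0 y0 c hc G hG ψ hψc hψint, ?_⟩
  -- maximality
  intro φ hφ0 hφd t ht
  have hgd : ∀ n, ∀ t ∈ Icc t0 (t0 + c),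
      HasDerivWithinAt (g n) (G t (g n t) + εs n) (Icc t0 (t0 + c)) t := by
    intro n
    have := integral_to_deriv t0 y0 c hc (Gn n) (hGnc n) (g n) (hgc n) (hgint n)
    exact this
  have hcomp : ∀ n, φ t ≤ g n t := by
    intro n
    exact comparison t0 c G (hεpos n) φ (g n) (by rw [hφ0, hg0 n]) hφd (hgd n) t ht
  exact ge_of_tendsto (hconv t ht) (Eventually.of_forall fun j => hcomp (σ j))

end PeanoAux

open Set PeanoAux

theorem peano_least_greatest (t0 y0 a b L : ℝ)
    (ha : 0 < a) (hb : 0 < b) (hL : 0 < L)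
    (f : ℝ → ℝ → ℝ)
    (hf : ContinuousOn (fun p : ℝ × ℝ => f p.1 p.2)
      (Icc t0 (t0 + a) ×ˢ Icc (y0 - b) (y0 + b)))
    (hfL : ∀ t ∈ Icc t0 (t0 + a), ∀ y ∈ Icc (y0 - b) (y0 + b), |f t y| ≤ L)
    (c : ℝ) (hc : c = min a (b / L)) :
    ∃ φlow φhigh : ℝ → ℝ,
      (φlow t0 = y0 ∧ (∀ t ∈ Icc t0 (t0 + c), φlow t ∈ Icc (y0 - b) (y0 + b)) ∧
        ∀ t ∈ Icc t0 (t0 + c),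
          HasDerivWithinAt φlow (f t (φlow t)) (Icc t0 (t0 + c)) t) ∧
      (φhigh t0 = y0 ∧ (∀ t ∈ Icc t0 (t0 + c), φhigh t ∈ Icc (y0 - b) (y0 + b)) ∧
        ∀ t ∈ Icc t0 (t0 + c),
          HasDerivWithinAt φhigh (f t (φhigh t)) (Icc t0 (t0 + c)) t) ∧
      ∀ φ : ℝ → ℝ, φ t0 = y0 →
        (∀ t ∈ Icc t0 (t0 + c), φ t ∈ Icc (y0 - b) (y0 + b)) →
        (∀ t ∈ Icc t0 (t0 + c),
          HasDerivWithinAt φ (f t (φ t)) (Icc t0 (t0 + c)) t) →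
        ∀ t ∈ Icc t0 (t0 + c), φlow t ≤ φ t ∧ φ t ≤ φhigh t := by
  have hc0 : 0 < c := by rw [hc]; exact lt_min ha (div_pos hb hL)
  have hca : c ≤ a := by rw [hc]; exact min_le_left _ _
  have hLcb : L * c ≤ b := by
    have h1 : c ≤ b / L := by rw [hc]; exact min_le_right _ _
    calc L * c ≤ L * (b / L) := mul_le_mul_of_nonneg_left h1 hL.le
      _ = b := by field_simp
  have hlea : t0 ≤ t0 + a := by linarith
  have hleb : y0 - b ≤ y0 + b := by linarith
  set F : ℝ → ℝ → ℝ :=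
    fun t y => f (projIcc t0 (t0 + a) hlea t : ℝ) (projIcc (y0 - b) (y0 + b) hleb y : ℝ)
    with hF
  have hFc : Continuous fun p : ℝ × ℝ => F p.1 p.2 := by
    have hP : Continuous fun p : ℝ × ℝ =>
        (((projIcc t0 (t0 + a) hlea p.1 : ℝ), (projIcc (y0 - b) (y0 + b) hleb p.2 : ℝ)) :
          ℝ × ℝ) :=
      ((continuous_subtype_val.comp continuous_projIcc).comp continuous_fst).prodMk
        ((continuous_subtype_val.comp continuous_projIcc).comp continuous_snd)
    exact hf.comp_continuous hP fun p =>
      mk_mem_prod (projIcc t0 (t0 + a) hlea p.1).2 (projIcc (y0 - b) (y0 + b) hleb p.2).2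
  have hFM : ∀ t y, |F t y| ≤ L := fun t y =>
    hfL _ (projIcc t0 (t0 + a) hlea t).2 _ (projIcc (y0 - b) (y0 + b) hleb y).2
  have hsubI : Icc t0 (t0 + c) ⊆ Icc t0 (t0 + a) := Icc_subset_Icc le_rfl (by linarith)
  have hFf : ∀ t ∈ Icc t0 (t0 + c), ∀ y ∈ Icc (y0 - b) (y0 + b), F t y = f t y := by
    intro t ht y hy
    rw [hF]
    simp only [projIcc_of_mem hlea (hsubI ht), projIcc_of_mem hleb hy]
  -- greatest solution
  obtain ⟨gh, ghc, gh0, ghb, ghd, ghmax⟩ :=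
    greatest t0 y0 c hc0.le hL.le F hFc hFM
  -- least solution via reflection
  set Ft : ℝ → ℝ → ℝ := fun t y => -F t (-y) with hFt
  have hFtc : Continuous fun p : ℝ × ℝ => Ft p.1 p.2 := by
    have : Continuous fun p : ℝ × ℝ => F p.1 (-p.2) :=
      hFc.comp (continuous_fst.prodMk continuous_snd.neg)
    exact this.neg
  have hFtM : ∀ t y, |Ft t y| ≤ L := by
    intro t y
    rw [hFt]
    simp only [abs_neg]
    exact hFM t (-y)
  obtain ⟨gl, glc, gl0, glb, gld, glmax⟩ :=
    greatest t0 (-y0) c hc0.le hL.le Ft hFtc hFtM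
  have hband_gh : ∀ t ∈ Icc t0 (t0 + c), gh t ∈ Icc (y0 - b) (y0 + b) := by
    intro t ht
    have h1 := ghb t ht
    have h2 : L * (t - t0) ≤ L * c := mul_le_mul_of_nonneg_left (by linarith [ht.2]) hL.le
    rw [abs_le] at h1
    exact ⟨by linarith, by linarith⟩
  have hband_gl : ∀ t ∈ Icc t0 (t0 + c), -gl t ∈ Icc (y0 - b) (y0 + b) := by
    intro t ht
    have h1 := glb t ht
    have h2 : L * (t - t0) ≤ L * c := mul_le_mul_of_nonneg_left (by linarith [ht.2]) hL.le
    rw [abs_le] at h1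
    constructor <;> [linarith [h1.2]; linarith [h1.1]]
  refine ⟨fun t => -gl t, gh, ⟨by show -gl t0 = y0; rw [gl0]; ring, hband_gl, ?_⟩,
    ⟨gh0, hband_gh, ?_⟩, ?_⟩
  · -- φlow is a solution of y' = f
    intro t ht
    have h1 := (gld t ht).neg
    have h2 : -Ft t (gl t) = F t (-gl t) := by rw [hFt]; simp
    rw [h2] at h1
    rwa [hFf t ht _ (hband_gl t ht)] at h1
  · -- φhigh is a solution of y' = f
    intro t ht
    have h1 := ghd t ht
    rwa [hFf t ht _ (hband_gh t ht)] at h1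
  · -- extremality
    intro φ hφ0 hφband hφd
    have hφF : ∀ t ∈ Icc t0 (t0 + c), HasDerivWithinAt φ (F t (φ t)) (Icc t0 (t0 + c)) t := by
      intro t ht
      rw [hFf t ht _ (hφband t ht)]
      exact hφd t ht
    have hhigh := ghmax φ hφ0 hφF
    have hφFt : ∀ t ∈ Icc t0 (t0 + c),
        HasDerivWithinAt (fun s => -φ s) (Ft t (-φ t)) (Icc t0 (t0 + c)) t := by
      intro t ht
      have h1 := (hφF t ht).neg
      have h2 : Ft t (-φ t) = -F t (φ t) := by rw [hFt]; simp
      rwa [h2]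
    have hlow := glmax (fun s => -φ s) (by show -φ t0 = -y0; rw [hφ0]) hφFt
    intro t ht
    have h1 : -φ t ≤ gl t := hlow t ht
    exact ⟨by show -gl t ≤ φ t; linarith, hhigh t ht⟩
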